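/- Let a₁, b₁, c₁ > 0 satisfy the strict triangle inequalities. Then: (i) there exists exactly one point M with dist O M < R such that b₁ · (a · dist M A) = a₁ · (b · dist M B) and c₁ · (b · dist M B) = b₁ · (c · dist M C); (ii) if moreover (a₁, b₁, c₁) is not proportional to (a, b, c), there exists exactly one point N with dist O N > R satisfying the same two equations, and this N is the inverse of the point M from (i) with respect to the circumcircle: N = inversion O R M. -/

import Mathlib

open EuclideanGeometry RealInnerProductSpace

noncomputable section

namespace Stmt2Aux

abbrev E2 := EuclideanSpace ℝ (Fin 2)

def J (x : E2) : E2 := (WithLp.equiv 2 (Fin 2 → ℝ)).symm ![-(x 1), x 0]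

lemma J0 (x : E2) : J x 0 = -(x 1) := rfl
lemma J1 (x : E2) : J x 1 = x 0 := rfl

lemma inner_eq (x y : E2) : ⟪x, y⟫ = x 0 * y 0 + x 1 * y 1 := by
  rw [PiLp.inner_apply]; simp [Fin.sum_univ_two]; ring

lemma norm_sq_eq (x : E2) : ‖x‖^2 = x 0^2 + x 1^2 := by
  rw [← real_inner_self_eq_norm_sq, inner_eq]; ring

lemma coords_pos {e : E2} (he : e ≠ 0) : 0 < e 0 ^ 2 + e 1 ^ 2 := by
  by_contra h
  push_neg at h
  have h0 : e 0 ^ 2 = 0 := le_antisymm (by nlinarith [sq_nonneg (e 1)]) (sq_nonneg _)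
  have h1 : e 1 ^ 2 = 0 := le_antisymm (by nlinarith [sq_nonneg (e 0)]) (sq_nonneg _)
  rw [pow_eq_zero_iff (two_ne_zero)] at h0 h1
  apply he
  ext i
  fin_cases i <;> simp [h0, h1]

lemma exists_decomp (e : E2) (he : e ≠ 0) (m : E2) : ∃ t σ : ℝ, m = t • e + σ • J e := by
  have hq := coords_pos he
  refine ⟨(m 0 * e 0 + m 1 * e 1) / (e 0^2 + e 1^2), (m 1 * e 0 - m 0 * e 1) / (e 0^2 + e 1^2), ?_⟩
  ext i
  fin_cases i <;>
  · simp [J0, J1, PiLp.add_apply, PiLp.smul_apply, smul_eq_mul]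
    field_simp
    ring

lemma norm_comb (e : E2) (t σ : ℝ) : ‖t • e + σ • J e‖^2 = (t^2 + σ^2) * ‖e‖^2 := by
  rw [norm_sq_eq, norm_sq_eq]
  simp [J0, J1, PiLp.add_apply, PiLp.smul_apply, smul_eq_mul]
  ring

lemma inner_comb (e v : E2) (t σ : ℝ) : ⟪t • e + σ • J e, v⟫ = t * ⟪e, v⟫ + σ * ⟪J e, v⟫ := by
  rw [inner_add_left, real_inner_smul_left, real_inner_smul_left]

lemma eq_zero_of_inner {e : E2} (he : e ≠ 0) {v : E2} (h1 : ⟪e, v⟫ = 0) (h2 : ⟪J e, v⟫ = 0) :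
    v = 0 := by
  have hq := coords_pos he
  rw [inner_eq] at h1
  rw [inner_eq, J0, J1] at h2
  have hv0 : (e 0 ^ 2 + e 1 ^ 2) * v 0 = 0 := by linear_combination e 0 * h1 - e 1 * h2
  have hv1 : (e 0 ^ 2 + e 1 ^ 2) * v 1 = 0 := by linear_combination e 1 * h1 + e 0 * h2
  have h0 := (mul_eq_zero.1 hv0).resolve_left hq.ne'
  have h1' := (mul_eq_zero.1 hv1).resolve_left hq.ne'
  ext i
  fin_cases i <;> simp [h0, h1']

lemma sqeq {x y : ℝ} (hx : 0 ≤ x) (hy : 0 ≤ y) (h : x^2 = y^2) : x = y := by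
  have h2 : (x - y) * (x + y) = 0 := by linear_combination h
  rcases mul_eq_zero.1 h2 with h3 | h3
  · linarith
  · linarith

lemma lt_iff_sq {x y : ℝ} (hx : 0 ≤ x) (hy : 0 ≤ y) : x < y ↔ x^2 < y^2 := by
  constructor <;> intro h <;> nlinarith

lemma div_neg_iff_pos {q s : ℝ} (hs : 0 < s) : q / s < 0 ↔ q < 0 := by
  constructor
  · intro h
    rcases div_neg_iff.1 h with ⟨_, h2⟩ | ⟨h1, _⟩
    · linarith
    · exact h1
  · intro h
    exact div_neg_of_neg_of_pos h hs

lemma div_pos_iff_pos {q s : ℝ} (hs : 0 < s) : 0 < q / s ↔ 0 < q := by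
  constructor
  · intro h
    rcases div_pos_iff.1 h with ⟨h1, _⟩ | ⟨_, h2⟩
    · exact h1
    · linarith
  · intro h
    exact div_pos h hs

lemma pow_formula (A O P : E2) (R : ℝ) (hvR : ‖O - A‖ = R) (hP : P ≠ A) :
    dist O (inversion A 1 P) ^ 2 = R^2 + (1 - 2*⟪P - A, O - A⟫)/‖P - A‖^2 := by
  have hm0 : ‖P - A‖ ≠ 0 := by
    rw [← dist_eq_norm]
    exact (dist_pos.2 hP).ne'
  have hinv : inversion A 1 P - O = (‖P - A‖^2)⁻¹ • (P - A) - (O - A) := by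
    rw [inversion]
    simp only [vsub_eq_sub, vadd_eq_add]
    rw [dist_eq_norm, show (1/‖P - A‖)^2 = (‖P - A‖^2)⁻¹ by rw [div_pow, one_pow, one_div]]
    abel
  rw [dist_comm, dist_eq_norm, hinv, norm_sub_sq_real, real_inner_smul_left, norm_smul,
    hvR, norm_inv, norm_pow, norm_norm, mul_pow, real_inner_comm]
  have h2 : 0 < ‖P - A‖ := lt_of_le_of_ne (norm_nonneg _) (Ne.symm hm0)
  field_simp
  ring

lemma chord_inner (A X O : E2) (R cx : ℝ) (hOA : dist O A = R) (hOX : dist O X = R)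
    (hdXA : dist X A = cx) : ⟪X - A, O - A⟫ = cx^2/2 := by
  have h1 : ‖(O - A) - (X - A)‖ = R := by
    rw [show (O - A) - (X - A) = O - X by abel, ← dist_eq_norm, hOX]
  have h2 := norm_sub_sq_real (O - A) (X - A)
  rw [h1] at h2
  have hv2 : ‖O - A‖^2 = R^2 := by rw [← dist_eq_norm, hOA]
  have hm : ‖X - A‖ = cx := by rw [← dist_eq_norm, hdXA]
  rw [real_inner_comm]
  rw [hm, hv2] at h2
  linarith

end Stmt2Aux

open Stmt2Aux
set_option maxHeartbeats 4000000 in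
theorem stmt2 (A B C O : EuclideanSpace ℝ (Fin 2)) (R a b c a₁ b₁ c₁ : ℝ)
    (hABC : AffineIndependent ℝ ![A, B, C])
    (hR : 0 < R) (hOA : dist O A = R) (hOB : dist O B = R) (hOC : dist O C = R)
    (ha : a = dist B C) (hb : b = dist C A) (hc : c = dist A B)
    (ha₁ : 0 < a₁) (hb₁ : 0 < b₁) (hc₁ : 0 < c₁)
    (htri₁ : a₁ < b₁ + c₁) (htri₂ : b₁ < c₁ + a₁) (htri₃ : c₁ < a₁ + b₁) :
    (∃! M : EuclideanSpace ℝ (Fin 2), dist O M < R ∧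
        b₁ * (a * dist M A) = a₁ * (b * dist M B) ∧
        c₁ * (b * dist M B) = b₁ * (c * dist M C)) ∧
    ((¬ ∃ t : ℝ, 0 < t ∧ a₁ = t * a ∧ b₁ = t * b ∧ c₁ = t * c) →
      (∃! N : EuclideanSpace ℝ (Fin 2), R < dist O N ∧
          b₁ * (a * dist N A) = a₁ * (b * dist N B) ∧
          c₁ * (b * dist N B) = b₁ * (c * dist N C)) ∧
      (∀ M N : EuclideanSpace ℝ (Fin 2),
        (dist O M < R ∧ b₁ * (a * dist M A) = a₁ * (b * dist M B) ∧
            c₁ * (b * dist M B) = b₁ * (c * dist M C)) →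
        (R < dist O N ∧ b₁ * (a * dist N A) = a₁ * (b * dist N B) ∧
            c₁ * (b * dist N B) = b₁ * (c * dist N C)) →
        N = inversion O R M)) := by
  -- distinctness and positivity
  have hAB : A ≠ B := by
    intro h; exact (hABC.injective.ne (show (0:Fin 3) ≠ 1 by decide)) (by simpa using h)
  have hAC : A ≠ C := by
    intro h; exact (hABC.injective.ne (show (0:Fin 3) ≠ 2 by decide)) (by simpa using h)
  have hBC : B ≠ C := by
    intro h; exact (hABC.injective.ne (show (1:Fin 3) ≠ 2 by decide)) (by simpa using h)
  have hc0 : 0 < c := hc ▸ dist_pos.2 hAB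
  have hb0 : 0 < b := hb ▸ dist_pos.2 hAC.symm
  have ha0 : 0 < a := ha ▸ dist_pos.2 hBC
  have hBA : B ≠ A := hAB.symm
  have hCA : C ≠ A := hAC.symm
  have hdBA : dist B A = c := by rw [dist_comm]; exact hc.symm
  have hdCA : dist C A = b := hb.symm
  set v : E2 := O - A with hv
  have hvR : ‖v‖ = R := by rw [hv, ← dist_eq_norm, hOA]
  set B' := inversion A 1 B with hB'
  set C' := inversion A 1 C with hC'
  have hdB'C' : dist B' C' = a / (c * b) := by
    rw [hB', hC', dist_inversion_inversion hBA hCA 1, hdBA, hdCA, one_pow, ← ha]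
    ring
  -- inner products with v
  have hfB : ⟪B - A, v⟫ = c^2/2 := chord_inner A B O R c hOA hOB hdBA
  have hfC : ⟪C - A, v⟫ = b^2/2 := chord_inner A C O R b hOA hOC hdCA
  have hB'A : B' - A = (1/c)^2 • (B - A) := by
    have h := inversion_vsub_center A 1 B
    rw [← hB'] at h
    simpa [vsub_eq_sub, hdBA] using h
  have hC'A : C' - A = (1/b)^2 • (C - A) := by
    have h := inversion_vsub_center A 1 C
    rw [← hC'] at h
    simpa [vsub_eq_sub, hdCA] using h
  have hfB' : ⟪B' - A, v⟫ = 1/2 := by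
    rw [hB'A, real_inner_smul_left, hfB]
    field_simp
  have hfC' : ⟪C' - A, v⟫ = 1/2 := by
    rw [hC'A, real_inner_smul_left, hfC]
    field_simp
  set e : E2 := C' - B' with he_def
  set d : ℝ := a / (c * b) with hd_def
  have hd0 : 0 < d := by rw [hd_def]; positivity
  have hne : ‖e‖ = d := by rw [he_def, ← dist_eq_norm, dist_comm, hdB'C']
  have he0 : e ≠ 0 := by
    intro h
    rw [h, norm_zero] at hne
    exact absurd hne.symm hd0.ne'
  have hev : ⟪e, v⟫ = 0 := by
    rw [he_def, show C' - B' = (C' - A) - (B' - A) by abel, inner_sub_left, hfC', hfB']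
    ring
  set κ : ℝ := ⟪J e, v⟫ with hκdef
  have hκ : κ ≠ 0 := by
    intro h
    have hv0 : v = 0 := eq_zero_of_inner he0 hev h
    rw [hv0, norm_zero] at hvR
    exact absurd hvR.symm hR.ne'
  set rB : ℝ := a * b₁ / (a₁ * (c * b)) with hrB
  set rC : ℝ := a * c₁ / (a₁ * (c * b)) with hrC
  have hrB0 : 0 < rB := by rw [hrB]; positivity
  have hrC0 : 0 < rC := by rw [hrC]; positivity
  have hrBd : rB = d * b₁ / a₁ := by rw [hrB, hd_def]; field_simp
  have hrCd : rC = d * c₁ / a₁ := by rw [hrC, hd_def]; field_simp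
  -- inversion distance helpers
  have hdiA : ∀ M : E2, dist (inversion A 1 M) A = 1 / dist M A := by
    intro M; rw [dist_inversion_center, one_pow]
  have hdiB : ∀ M : E2, M ≠ A → dist (inversion A 1 M) B' = dist M B / (dist M A * c) := by
    intro M hM
    rw [hB', dist_inversion_inversion hM hBA, one_pow, hdBA]
    ring
  have hdiC : ∀ M : E2, M ≠ A → dist (inversion A 1 M) C' = dist M C / (dist M A * b) := by
    intro M hM
    rw [hC', dist_inversion_inversion hM hCA, one_pow, hdCA]
    ring
  -- the characterization of solutions via the inversion centered at A
  have CHAR : ∀ M : E2,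
      (b₁ * (a * dist M A) = a₁ * (b * dist M B) ∧
        c₁ * (b * dist M B) = b₁ * (c * dist M C)) ↔
      (M ≠ A ∧ dist (inversion A 1 M) B' = rB ∧ dist (inversion A 1 M) C' = rC) := by
    intro M
    constructor
    · rintro ⟨e1, e2⟩
      have hMA : M ≠ A := by
        rintro rfl
        rw [dist_self, ← hc] at e1
        nlinarith [mul_pos hb0 hc0]
      have hD : 0 < dist M A := dist_pos.2 hMA
      refine ⟨hMA, ?_, ?_⟩
      · rw [hdiB M hMA, hrB,
          div_eq_div_iff (mul_ne_zero hD.ne' hc0.ne') (by positivity)]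
        linear_combination (-c) * e1
      · rw [hdiC M hMA, hrC,
          div_eq_div_iff (mul_ne_zero hD.ne' hb0.ne') (by positivity)]
        have h3 : b₁ * (dist M C * (a₁ * (c * b))) = b₁ * (a * c₁ * (dist M A * b)) := by
          linear_combination (-(b * c₁)) * e1 + (-(a₁ * b)) * e2
        exact mul_left_cancel₀ hb₁.ne' h3
    · rintro ⟨hMA, h1, h2⟩
      have hD : 0 < dist M A := dist_pos.2 hMA
      have hx1 : (dist M A * c) ≠ 0 := mul_ne_zero hD.ne' hc0.ne'
      have hx2 : (dist M A * b) ≠ 0 := mul_ne_zero hD.ne' hb0.ne'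
      have hy : (a₁ * (c * b)) ≠ 0 := by positivity
      rw [hdiB M hMA, hrB, div_eq_div_iff hx1 hy] at h1
      rw [hdiC M hMA, hrC, div_eq_div_iff hx2 hy] at h2
      constructor
      · have h3 : c * (b₁ * (a * dist M A)) = c * (a₁ * (b * dist M B)) := by
          linear_combination (-1 : ℝ) * h1
        exact mul_left_cancel₀ hc0.ne' h3
      · have h3 : (a₁ * c * b) * (c₁ * (b * dist M B)) = (a₁ * c * b) * (b₁ * (c * dist M C)) := by
          linear_combination (c₁ * b) * h1 - (b₁ * c) * h2
        exact mul_left_cancel₀ (by positivity) h3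
  -- the two intersection points
  set t₀ : ℝ := (d^2 + rB^2 - rC^2)/(2*d^2) with ht₀
  have hdne : d ≠ 0 := hd0.ne'
  have hs2pos : 0 < rB^2/d^2 - t₀^2 := by
    have key : 0 < 4*a₁^2*b₁^2 - (a₁^2 + b₁^2 - c₁^2)^2 := by
      have p1 : (0:ℝ) < b₁ + c₁ - a₁ := by linarith
      have p2 : (0:ℝ) < c₁ + a₁ - b₁ := by linarith
      have p3 : (0:ℝ) < a₁ + b₁ - c₁ := by linarith
      have p4 : (0:ℝ) < a₁ + b₁ + c₁ := by linarith
      have hprod := mul_pos p1 (mul_pos p2 (mul_pos p3 p4))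
      have hid : 4*a₁^2*b₁^2 - (a₁^2 + b₁^2 - c₁^2)^2 =
          (b₁ + c₁ - a₁) * ((c₁ + a₁ - b₁) * ((a₁ + b₁ - c₁) * (a₁ + b₁ + c₁))) := by ring
      rw [hid]
      exact hprod
    have heq : rB^2/d^2 - t₀^2 = (4*a₁^2*b₁^2 - (a₁^2 + b₁^2 - c₁^2)^2)/(4*a₁^4) := by
      rw [ht₀, hrBd, hrCd]
      field_simp
      ring
    rw [heq]
    positivity
  set s₀ : ℝ := Real.sqrt (rB^2/d^2 - t₀^2) with hs₀def
  have hs₀pos : 0 < s₀ := Real.sqrt_pos.2 hs2pos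
  have hs₀sq : s₀^2 = rB^2/d^2 - t₀^2 := Real.sq_sqrt hs2pos.le
  set Pt : ℝ → E2 := fun σ => B' + (t₀ • e + σ • J e) with hPt
  have hPtB' : ∀ σ : ℝ, Pt σ - B' = t₀ • e + σ • J e := by
    intro σ; show B' + (t₀ • e + σ • J e) - B' = _; exact add_sub_cancel_left _ _
  have hPtC' : ∀ σ : ℝ, Pt σ - C' = (t₀ - 1) • e + σ • J e := by
    intro σ
    rw [hPt]
    simp only
    rw [sub_smul, one_smul, he_def]
    abel
  have hdistPtB : ∀ σ : ℝ, dist (Pt σ) B' ^ 2 = (t₀^2 + σ^2) * d^2 := by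
    intro σ
    rw [dist_eq_norm, hPtB' σ, norm_comb, hne]
  have hdistPtC : ∀ σ : ℝ, dist (Pt σ) C' ^ 2 = ((t₀-1)^2 + σ^2) * d^2 := by
    intro σ
    rw [dist_eq_norm, hPtC' σ, norm_comb, hne]
  have hdists : ∀ σ : ℝ, σ^2 = s₀^2 → dist (Pt σ) B' = rB ∧ dist (Pt σ) C' = rC := by
    intro σ hσ
    constructor
    · refine sqeq dist_nonneg hrB0.le ?_
      rw [hdistPtB σ, hσ, hs₀sq]
      field_simp
      ring
    · refine sqeq dist_nonneg hrC0.le ?_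
      rw [hdistPtC σ, hσ, hs₀sq, ht₀]
      field_simp
      ring
  have hsols : ∀ P : E2, (dist P B' = rB ∧ dist P C' = rC) ↔ (P = Pt s₀ ∨ P = Pt (-s₀)) := by
    intro P
    constructor
    · rintro ⟨h1, h2⟩
      obtain ⟨t, σ, hdec⟩ := exists_decomp e he0 (P - B')
      have hP : P = B' + (t • e + σ • J e) := by rw [← hdec]; abel
      have hb2 : rB ^ 2 = (t^2 + σ^2) * d^2 := by
        rw [← h1, dist_eq_norm, hdec, norm_comb, hne]
      have hc2 : rC ^ 2 = ((t-1)^2 + σ^2) * d^2 := by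
        have hPC : P - C' = (t-1) • e + σ • J e := by
          rw [hP, he_def, sub_smul, one_smul]
          abel
        rw [← h2, dist_eq_norm, hPC, norm_comb, hne]
      have ht : t = t₀ := by
        rw [ht₀, eq_div_iff (by positivity)]
        linear_combination hc2 - hb2
      subst ht
      have hσ2 : σ^2 = s₀^2 := by
        rw [hs₀sq]
        field_simp
        linear_combination -hb2
      have hcases : σ = s₀ ∨ σ = -s₀ := by
        have h6 : (σ - s₀) * (σ + s₀) = 0 := by linear_combination hσ2
        rcases mul_eq_zero.1 h6 with h | h
        · left; linarith
        · right; linarith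
      rcases hcases with h | h
      · left; rw [hP, h, hPt]
      · right; rw [hP, h, hPt]
    · rintro (rfl | rfl)
      · exact hdists s₀ rfl
      · exact hdists (-s₀) (by ring)
  have hfPt : ∀ σ : ℝ, ⟪Pt σ - A, v⟫ = 1/2 + σ * κ := by
    intro σ
    have hstep : Pt σ - A = (B' - A) + (t₀ • e + σ • J e) := by
      show B' + (t₀ • e + σ • J e) - A = _; exact add_sub_right_comm _ _ _
    rw [hstep, inner_add_left, hfB', inner_comb, hev, ← hκdef]
    ring
  -- side criteria
  have hside : ∀ P : E2, P ≠ A →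
      ((dist O (inversion A 1 P) < R ↔ 1/2 < ⟪P - A, v⟫) ∧
       (R < dist O (inversion A 1 P) ↔ ⟪P - A, v⟫ < 1/2)) := by
    intro P hP
    have h1 : dist O (inversion A 1 P) ^ 2 = R^2 + (1 - 2*⟪P - A, v⟫)/‖P - A‖^2 := by
      rw [hv] at hvR ⊢
      exact pow_formula A O P R hvR hP
    have hm2 : 0 < ‖P - A‖^2 := by
      have : ‖P - A‖ ≠ 0 := by
        rw [← dist_eq_norm]
        exact (dist_pos.2 hP).ne'
      positivity
    constructor
    · rw [lt_iff_sq dist_nonneg hR.le, h1]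
      constructor
      · intro h
        have h2 : (1 - 2*⟪P - A, v⟫)/‖P - A‖^2 < 0 := by linarith
        have h3 := (div_neg_iff_pos hm2).1 h2
        linarith
      · intro h
        have h2 : (1 - 2*⟪P - A, v⟫)/‖P - A‖^2 < 0 :=
          (div_neg_iff_pos hm2).2 (by linarith)
        linarith
    · rw [lt_iff_sq hR.le dist_nonneg, h1]
      constructor
      · intro h
        have h2 : 0 < (1 - 2*⟪P - A, v⟫)/‖P - A‖^2 := by linarith
        have h3 := (div_pos_iff_pos hm2).1 h2
        linarith
      · intro h
        have h2 : 0 < (1 - 2*⟪P - A, v⟫)/‖P - A‖^2 :=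
          (div_pos_iff_pos hm2).2 (by linarith)
        linarith
  -- choose the sign so that Pt σstar is the inside point
  set σstar : ℝ := if 0 < κ then s₀ else -s₀ with hσstar
  have hσsq : σstar^2 = s₀^2 := by rw [hσstar]; split_ifs <;> ring
  have hσκ : 0 < σstar * κ := by
    rw [hσstar]; split_ifs with h
    · exact mul_pos hs₀pos h
    · have hκneg : κ < 0 := lt_of_le_of_ne (not_lt.1 h) hκ
      exact mul_pos_of_neg_of_neg (neg_neg_of_pos hs₀pos) hκneg
  have hσset : σstar = s₀ ∨ σstar = -s₀ := by
    rw [hσstar]; split_ifs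
    · exact Or.inl rfl
    · exact Or.inr rfl
  have hfin : 1/2 < ⟪Pt σstar - A, v⟫ := by rw [hfPt]; linarith
  have hfout : ⟪Pt (-σstar) - A, v⟫ < 1/2 := by
    rw [hfPt]
    have : -σstar * κ = -(σstar * κ) := by ring
    rw [this]
    linarith
  have hPinA : Pt σstar ≠ A := by
    intro hPA
    have h := hfPt σstar
    rw [hPA, sub_self, inner_zero_left] at h
    linarith
  set M₀ : E2 := inversion A 1 (Pt σstar) with hM₀def
  have hM₀A : M₀ ≠ A := by
    rw [hM₀def]
    intro h
    exact hPinA ((inversion_eq_center one_ne_zero).1 h)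
  have hιM₀ : inversion A 1 M₀ = Pt σstar := by
    rw [hM₀def, inversion_inversion A one_ne_zero]
  have hd₀ := hdists σstar hσsq
  have hM₀eqns : b₁ * (a * dist M₀ A) = a₁ * (b * dist M₀ B) ∧
      c₁ * (b * dist M₀ B) = b₁ * (c * dist M₀ C) :=
    (CHAR M₀).2 ⟨hM₀A, by rw [hιM₀]; exact hd₀.1, by rw [hιM₀]; exact hd₀.2⟩
  have hM₀in : dist O M₀ < R := by
    have h := ((hside (Pt σstar) hPinA).1).2 hfin
    rw [← hM₀def] at h
    exact h
  -- uniqueness of the inside point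
  have huniq_in : ∀ M : E2,
      (dist O M < R ∧ b₁ * (a * dist M A) = a₁ * (b * dist M B) ∧
        c₁ * (b * dist M B) = b₁ * (c * dist M C)) → M = M₀ := by
    rintro M ⟨hlt, heq1, heq2⟩
    obtain ⟨hMA, h1, h2⟩ := (CHAR M).1 ⟨heq1, heq2⟩
    have hιMA : inversion A 1 M ≠ A := fun h => hMA ((inversion_eq_center one_ne_zero).1 h)
    have hMside : 1/2 < ⟪inversion A 1 M - A, v⟫ := by
      have hii := inversion_inversion A (one_ne_zero (α := ℝ)) M
      have hiff := (hside (inversion A 1 M) hιMA).1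
      rw [hii] at hiff
      exact hiff.1 hlt
    have hsol : inversion A 1 M = Pt s₀ ∨ inversion A 1 M = Pt (-s₀) := (hsols _).1 ⟨h1, h2⟩
    have hPtstar : inversion A 1 M = Pt σstar := by
      rcases hσset with hs | hs
      · rcases hsol with h | h
        · rw [h, hs]
        · exfalso
          have h' : ⟪Pt (-s₀) - A, v⟫ < 1/2 := by rw [← hs]; exact hfout
          rw [h] at hMside
          linarith
      · rcases hsol with h | h
        · exfalso
          have h' : ⟪Pt (-σstar) - A, v⟫ < 1/2 := hfout
          rw [hs, neg_neg] at h'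
          rw [h] at hMside
          linarith
        · rw [h, hs]
    have : M = inversion A 1 (Pt σstar) := by
      rw [← hPtstar, inversion_inversion A one_ne_zero]
    rw [this, ← hM₀def]
  refine ⟨⟨M₀, ⟨hM₀in, hM₀eqns.1, hM₀eqns.2⟩, huniq_in⟩, ?_⟩
  -- part (ii)
  intro hnp
  have hPoutA : Pt (-σstar) ≠ A := by
    intro hPA
    have hd' := hdists (-σstar) (by rw [neg_sq]; exact hσsq)
    rw [hPA] at hd'
    obtain ⟨hd1, hd2⟩ := hd'
    have hAB' : dist A B' = 1/c := by
      rw [hB', dist_comm, dist_inversion_center, one_pow, hdBA]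
    have hAC' : dist A C' = 1/b := by
      rw [hC', dist_comm, dist_inversion_center, one_pow, hdCA]
    rw [hAB', hrB, div_eq_div_iff hc0.ne' (by positivity)] at hd1
    rw [hAC', hrC, div_eq_div_iff hb0.ne' (by positivity)] at hd2
    apply hnp
    refine ⟨a₁/a, by positivity, by field_simp, ?_, ?_⟩
    · have hq : c * (a₁ * b) = c * (b₁ * a) := by linear_combination hd1
      have hq' := mul_left_cancel₀ hc0.ne' hq
      field_simp
      linear_combination -hq'
    · have hq : b * (a₁ * c) = b * (c₁ * a) := by linear_combination hd2
      have hq' := mul_left_cancel₀ hb0.ne' hq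
      field_simp
      linear_combination -hq'
  set N₀ : E2 := inversion A 1 (Pt (-σstar)) with hN₀def
  have hN₀A : N₀ ≠ A := by
    rw [hN₀def]
    intro h
    exact hPoutA ((inversion_eq_center one_ne_zero).1 h)
  have hιN₀ : inversion A 1 N₀ = Pt (-σstar) := by
    rw [hN₀def, inversion_inversion A one_ne_zero]
  have hd₀' := hdists (-σstar) (by rw [neg_sq]; exact hσsq)
  have hN₀eqns : b₁ * (a * dist N₀ A) = a₁ * (b * dist N₀ B) ∧
      c₁ * (b * dist N₀ B) = b₁ * (c * dist N₀ C) :=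
    (CHAR N₀).2 ⟨hN₀A, by rw [hιN₀]; exact hd₀'.1, by rw [hιN₀]; exact hd₀'.2⟩
  have hN₀out : R < dist O N₀ := by
    have h := ((hside (Pt (-σstar)) hPoutA).2).2 hfout
    rw [← hN₀def] at h
    exact h
  have huniq_out : ∀ N : E2,
      (R < dist O N ∧ b₁ * (a * dist N A) = a₁ * (b * dist N B) ∧
        c₁ * (b * dist N B) = b₁ * (c * dist N C)) → N = N₀ := by
    rintro N ⟨hlt, heq1, heq2⟩
    obtain ⟨hNA, h1, h2⟩ := (CHAR N).1 ⟨heq1, heq2⟩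
    have hιNA : inversion A 1 N ≠ A := fun h => hNA ((inversion_eq_center one_ne_zero).1 h)
    have hNside : ⟪inversion A 1 N - A, v⟫ < 1/2 := by
      have hii := inversion_inversion A (one_ne_zero (α := ℝ)) N
      have hiff := (hside (inversion A 1 N) hιNA).2
      rw [hii] at hiff
      exact hiff.1 hlt
    have hsol : inversion A 1 N = Pt s₀ ∨ inversion A 1 N = Pt (-s₀) := (hsols _).1 ⟨h1, h2⟩
    have hPtstar : inversion A 1 N = Pt (-σstar) := by
      rcases hσset with hs | hs
      · rcases hsol with h | h
        · exfalso
          have h' : 1/2 < ⟪Pt s₀ - A, v⟫ := by rw [← hs]; exact hfin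
          rw [h] at hNside
          linarith
        · rw [h, hs]
      · rcases hsol with h | h
        · rw [h, hs, neg_neg]
        · exfalso
          have h' : 1/2 < ⟪Pt (-s₀) - A, v⟫ := by rw [← hs]; exact hfin
          rw [h] at hNside
          linarith
    have : N = inversion A 1 (Pt (-σstar)) := by
      rw [← hPtstar, inversion_inversion A one_ne_zero]
    rw [this, ← hN₀def]
  refine ⟨⟨N₀, ⟨hN₀out, hN₀eqns.1, hN₀eqns.2⟩, huniq_out⟩, ?_⟩
  -- the inverse relation
  intro M N hM hN
  have hMO : M ≠ O := by
    rintro rfl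
    obtain ⟨_, e1, e2⟩ := hM
    rw [hOA, hOB] at e1
    rw [hOB, hOC] at e2
    apply hnp
    have hq1 : R * (b₁ * a) = R * (a₁ * b) := by linear_combination e1
    have hq2 : R * (c₁ * b) = R * (b₁ * c) := by linear_combination e2
    have hq1' := mul_left_cancel₀ hR.ne' hq1
    have hq2' := mul_left_cancel₀ hR.ne' hq2
    refine ⟨a₁/a, by positivity, by field_simp, ?_, ?_⟩
    · field_simp
      linear_combination hq1'
    · have hq3 : b * (c₁ * a) = b * (a₁ * c) := by
        linear_combination a * hq2' + c * hq1'
      have hq3' := mul_left_cancel₀ hb0.ne' hq3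
      field_simp
      linear_combination hq3'
  have hdOM : 0 < dist O M := dist_pos.2 (Ne.symm hMO)
  have hAO : A ≠ O := by
    intro h
    rw [h, dist_self] at hOA
    exact hR.ne hOA
  have hBO : B ≠ O := by
    intro h
    rw [h, dist_self] at hOB
    exact hR.ne hOB
  have hCO : C ≠ O := by
    intro h
    rw [h, dist_self] at hOC
    exact hR.ne hOC
  have hinvA : inversion O R A = A :=
    inversion_of_mem_sphere (Metric.mem_sphere.2 (by rw [dist_comm]; exact hOA))
  have hinvB : inversion O R B = B :=
    inversion_of_mem_sphere (Metric.mem_sphere.2 (by rw [dist_comm]; exact hOB))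
  have hinvC : inversion O R C = C :=
    inversion_of_mem_sphere (Metric.mem_sphere.2 (by rw [dist_comm]; exact hOC))
  have hdA' : dist (inversion O R M) A = R^2/(dist M O * dist A O) * dist M A := by
    conv_lhs => rw [← hinvA]
    exact dist_inversion_inversion hMO hAO R
  have hdB'2 : dist (inversion O R M) B = R^2/(dist M O * dist B O) * dist M B := by
    conv_lhs => rw [← hinvB]
    exact dist_inversion_inversion hMO hBO R
  have hdC'2 : dist (inversion O R M) C = R^2/(dist M O * dist C O) * dist M C := by
    conv_lhs => rw [← hinvC]
    exact dist_inversion_inversion hMO hCO R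
  have hdAO : dist A O = R := by rw [dist_comm]; exact hOA
  have hdBO : dist B O = R := by rw [dist_comm]; exact hOB
  have hdCO : dist C O = R := by rw [dist_comm]; exact hOC
  rw [hdAO] at hdA'
  rw [hdBO] at hdB'2
  rw [hdCO] at hdC'2
  obtain ⟨hMin, e1, e2⟩ := hM
  have hNsol : R < dist O (inversion O R M) ∧
      b₁ * (a * dist (inversion O R M) A) = a₁ * (b * dist (inversion O R M) B) ∧
      c₁ * (b * dist (inversion O R M) B) = b₁ * (c * dist (inversion O R M) C) := by
    refine ⟨?_, ?_, ?_⟩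
    · rw [dist_center_inversion, lt_div_iff₀ hdOM, pow_two]
      exact mul_lt_mul_of_pos_left hMin hR
    · rw [hdA', hdB'2]
      linear_combination (R^2/(dist M O * R)) * e1
    · rw [hdB'2, hdC'2]
      linear_combination (R^2/(dist M O * R)) * e2
  have h1 := huniq_out N hN
  have h2 := huniq_out (inversion O R M) hNsol
  rw [h1, h2]
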